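/- arXiv:1710.07926 — 2 statements merged into one kernel-verified Lean document; each statement's English description precedes it below -/
import Mathlib

section
/- Let 0 < α < 1, C > 0, p ≥ 1 an integer, and n_1, …, n_p positive integers with N = ∑_i n_i. Let (v_{i,k})_{i≤p, k≤n_i} be vectors in a Hilbert space H with ‖v_{i,k}‖_{L²} ≤ C·k^{-α} (i.e. √(E‖v_{i,k}‖²) ≤ C k^{-α}). Then E[‖(1/N)∑_{i=1}^{p}∑_{k=1}^{n_i} v_{i,k}‖²] ≤ C²(1−α)^{-2}·p^{2α}·N^{-2α}. -/
open MeasureTheory ENNReal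

/-- `eLpNorm f 2 μ = ENNReal.ofReal (√(∫ ‖f‖²))` for `f ∈ L²`. -/
private lemma eLpNorm_two_eq {Ω : Type*} {m0 : MeasurableSpace Ω} {μ : Measure Ω}
    {H : Type*} [NormedAddCommGroup H] {f : Ω → H} (hf : MemLp f 2 μ) :
    eLpNorm f 2 μ = ENNReal.ofReal (Real.sqrt (∫ ω, ‖f ω‖ ^ 2 ∂μ)) := by
  rw [hf.eLpNorm_eq_integral_rpow_norm (by norm_num) (by norm_num)]
  have h2 : (2 : ℝ≥0∞).toReal = (2 : ℝ) := by norm_num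
  rw [h2, Real.sqrt_eq_rpow, one_div]
  congr 2
  refine integral_congr_ae (Filter.Eventually.of_forall fun ω => ?_)
  show ‖f ω‖ ^ (2 : ℝ) = ‖f ω‖ ^ 2
  rw [← Real.rpow_natCast ‖f ω‖ 2]
  norm_num

/-- L² triangle inequality for finite sums. -/
private lemma sqrt_int_sum_le {Ω : Type*} {m0 : MeasurableSpace Ω} {μ : Measure Ω}
    {H : Type*} [NormedAddCommGroup H] {ι : Type*} (s : Finset ι) (f : ι → Ω → H)
    (hf : ∀ i ∈ s, MemLp (f i) 2 μ) :
    Real.sqrt (∫ ω, ‖∑ i ∈ s, f i ω‖ ^ 2 ∂μ)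
      ≤ ∑ i ∈ s, Real.sqrt (∫ ω, ‖f i ω‖ ^ 2 ∂μ) := by
  have hsum : MemLp (∑ i ∈ s, f i) 2 μ := memLp_finset_sum' s hf
  have h1 : eLpNorm (∑ i ∈ s, f i) 2 μ ≤ ∑ i ∈ s, eLpNorm (f i) 2 μ :=
    eLpNorm_sum_le (fun i hi => (hf i hi).aestronglyMeasurable) (by norm_num)
  have h2 : eLpNorm (∑ i ∈ s, f i) 2 μ
      = ENNReal.ofReal (Real.sqrt (∫ ω, ‖∑ i ∈ s, f i ω‖ ^ 2 ∂μ)) := by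
    rw [eLpNorm_two_eq hsum]
    congr 2
    refine integral_congr_ae (Filter.Eventually.of_forall fun ω => ?_)
    simp [Finset.sum_apply]
  rw [h2] at h1
  have h3 : ∑ i ∈ s, eLpNorm (f i) 2 μ
      = ENNReal.ofReal (∑ i ∈ s, Real.sqrt (∫ ω, ‖f i ω‖ ^ 2 ∂μ)) := by
    rw [ENNReal.ofReal_sum_of_nonneg (fun i _ => Real.sqrt_nonneg _)]
    exact Finset.sum_congr rfl fun i hi => eLpNorm_two_eq (hf i hi)
  rw [h3] at h1
  exact (ENNReal.ofReal_le_ofReal_iff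
    (Finset.sum_nonneg fun i _ => Real.sqrt_nonneg _)).mp h1

/-- `∑_{k=1}^m k^{-α} ≤ (1-α)⁻¹ m^{1-α}` for `0 < α < 1`. -/
private lemma sum_rpow_neg_le {α : ℝ} (hα0 : 0 < α) (hα1 : α < 1) (m : ℕ) :
    ∑ k ∈ Finset.Icc 1 m, (k : ℝ) ^ (-α) ≤ (1 - α)⁻¹ * (m : ℝ) ^ (1 - α) := by
  have hγ : 0 < 1 - α := by linarith
  induction m with
  | zero => simp [Real.zero_rpow hγ.ne']
  | succ m ih =>
    rw [Finset.sum_Icc_succ_top (Nat.one_le_iff_ne_zero.mpr (Nat.succ_ne_zero m))]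
    have hm1 : (0 : ℝ) < (m : ℝ) + 1 := by positivity
    -- Bernoulli: (m/(m+1))^(1-α) ≤ 1 - (1-α)/(m+1)
    have hb : ((m : ℝ) / ((m : ℝ) + 1)) ^ (1 - α) ≤ 1 - (1 - α) / ((m : ℝ) + 1) := by
      have hm0 : (0 : ℝ) ≤ (m : ℝ) := Nat.cast_nonneg m
      have hs : -1 ≤ -(1 / ((m : ℝ) + 1)) := by
        rw [neg_le_neg_iff, div_le_one hm1]; linarith
      have := rpow_one_add_le_one_add_mul_self hs hγ.le (by linarith)
      have heq : (1 : ℝ) + -(1 / ((m : ℝ) + 1)) = (m : ℝ) / ((m : ℝ) + 1) := by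
        field_simp
        ring
      rw [heq] at this
      calc ((m : ℝ) / ((m : ℝ) + 1)) ^ (1 - α) ≤ 1 + (1 - α) * -(1 / ((m : ℝ) + 1)) := this
        _ = 1 - (1 - α) / ((m : ℝ) + 1) := by ring
    -- m^(1-α) ≤ (m+1)^(1-α) - (1-α)(m+1)^(-α)
    have hkey : (m : ℝ) ^ (1 - α) ≤ ((m : ℝ) + 1) ^ (1 - α)
        - (1 - α) * ((m : ℝ) + 1) ^ (-α) := by
      have hbm := mul_le_mul_of_nonneg_right hb (Real.rpow_nonneg hm1.le (1 - α))
      calc (m : ℝ) ^ (1 - α)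
          = ((m : ℝ) / ((m : ℝ) + 1) * ((m : ℝ) + 1)) ^ (1 - α) := by
            rw [div_mul_cancel₀ _ hm1.ne']
        _ = ((m : ℝ) / ((m : ℝ) + 1)) ^ (1 - α) * ((m : ℝ) + 1) ^ (1 - α) :=
            Real.mul_rpow (by positivity) hm1.le
        _ ≤ (1 - (1 - α) / ((m : ℝ) + 1)) * ((m : ℝ) + 1) ^ (1 - α) := hbm
        _ = ((m : ℝ) + 1) ^ (1 - α)
            - (1 - α) * (((m : ℝ) + 1) ^ (1 - α) / ((m : ℝ) + 1)) := by ring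
        _ = ((m : ℝ) + 1) ^ (1 - α) - (1 - α) * ((m : ℝ) + 1) ^ (-α) := by
            rw [← Real.rpow_sub_one hm1.ne']
            ring_nf
    push_cast
    have hinv : (0 : ℝ) < (1 - α)⁻¹ := by positivity
    have h4 := mul_le_mul_of_nonneg_left hkey hinv.le
    rw [mul_sub, ← mul_assoc, inv_mul_cancel₀ hγ.ne', one_mul] at h4
    linarith
  
/-- Hölder: `∑ n_i^γ ≤ p^(1-γ) (∑ n_i)^γ` for `0 < γ ≤ 1`. -/
private lemma sum_rpow_le {p : ℕ} (hp : 1 ≤ p) {γ : ℝ} (hγ0 : 0 < γ) (hγ1 : γ ≤ 1)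
    (z : Fin p → ℝ) (hz : ∀ i, 0 ≤ z i) :
    ∑ i, z i ^ γ ≤ (p : ℝ) ^ (1 - γ) * (∑ i, z i) ^ γ := by
  have hp0 : (0 : ℝ) < p := by exact_mod_cast hp
  have hq : 1 ≤ 1 / γ := by rw [le_div_iff₀ hγ0]; linarith
  have hw : ∑ _i : Fin p, (p : ℝ)⁻¹ = 1 := by
    rw [Finset.sum_const, Finset.card_univ, Fintype.card_fin, nsmul_eq_mul,
      mul_inv_cancel₀ hp0.ne']
  have h := Real.arith_mean_le_rpow_mean Finset.univ (fun _ => (p : ℝ)⁻¹)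
    (fun i => z i ^ γ) (fun i _ => by positivity) hw
    (fun i _ => Real.rpow_nonneg (hz i) γ) hq
  have hzz : ∀ i : Fin p, (z i ^ γ) ^ (1 / γ) = z i := fun i => by
    rw [← Real.rpow_mul (hz i), mul_one_div_cancel hγ0.ne', Real.rpow_one]
  simp only [hzz, one_div_one_div] at h
  rw [← Finset.mul_sum, ← Finset.mul_sum,
    Real.mul_rpow (by positivity) (Finset.sum_nonneg fun i _ => hz i)] at h
  have h2 := mul_le_mul_of_nonneg_left h hp0.le
  rw [← mul_assoc, mul_inv_cancel₀ hp0.ne', one_mul, ← mul_assoc] at h2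
  refine h2.trans_eq ?_
  congr 1
  calc (p : ℝ) * ((p : ℝ)⁻¹) ^ γ = (p : ℝ) ^ (1 : ℝ) * (p : ℝ) ^ (-γ) := by
        rw [Real.inv_rpow hp0.le, ← Real.rpow_neg hp0.le, Real.rpow_one]
    _ = (p : ℝ) ^ (1 - γ) := by rw [← Real.rpow_add hp0]; ring_nf

theorem stmt_10 {Ω : Type*} {m0 : MeasurableSpace Ω} (μ : Measure Ω) [IsProbabilityMeasure μ]
    {H : Type*} [NormedAddCommGroup H] [InnerProductSpace ℝ H] [CompleteSpace H]
    [SecondCountableTopology H]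
    (α C : ℝ) (hα0 : 0 < α) (hα1 : α < 1) (hC : 0 < C)
    (p : ℕ) (hp : 1 ≤ p) (n : Fin p → ℕ) (hn : ∀ i, 1 ≤ n i)
    (v : Fin p → ℕ → Ω → H)
    (hL2 : ∀ i k, MemLp (v i k) 2 μ)
    (hbound : ∀ i, ∀ k ∈ Finset.Icc 1 (n i),
      Real.sqrt (∫ ω, ‖v i k ω‖ ^ 2 ∂μ) ≤ C * (k : ℝ) ^ (-α)) :
    ∫ ω, ‖((∑ i, (n i : ℝ))⁻¹) • ∑ i, ∑ k ∈ Finset.Icc 1 (n i), v i k ω‖ ^ 2 ∂μ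
      ≤ C ^ 2 * ((1 - α)⁻¹) ^ 2 * (p : ℝ) ^ (2 * α) * (∑ i, (n i : ℝ)) ^ (-(2 * α)) := by
  have hγ : 0 < 1 - α := by linarith
  set N : ℝ := ∑ i, (n i : ℝ) with hNdef
  have hNpos : 0 < N := by
    refine Finset.sum_pos (fun i _ => by exact_mod_cast Nat.lt_of_lt_of_le Nat.zero_lt_one (hn i))
      (Finset.univ_nonempty_iff.mpr ?_)
    exact Fin.pos_iff_nonempty.mp (Nat.lt_of_lt_of_le Nat.zero_lt_one hp)
  set S : Ω → H := fun ω => ∑ i, ∑ k ∈ Finset.Icc 1 (n i), v i k ω with hSdef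
  set I : ℝ := ∫ ω, ‖S ω‖ ^ 2 ∂μ with hIdef
  have hI0 : 0 ≤ I := integral_nonneg fun ω => by positivity
  set B : ℝ := C * (1 - α)⁻¹ * (p : ℝ) ^ α * N ^ (1 - α) with hBdef
  -- Step A+B: L² triangle inequality and the per-term bound
  have hA : Real.sqrt I ≤ B := by
    have h1 : Real.sqrt I ≤ ∑ i, Real.sqrt (∫ ω, ‖∑ k ∈ Finset.Icc 1 (n i), v i k ω‖ ^ 2 ∂μ) :=
      sqrt_int_sum_le Finset.univ (fun i ω => ∑ k ∈ Finset.Icc 1 (n i), v i k ω)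
        (fun i _ => by
          convert memLp_finset_sum' (Finset.Icc 1 (n i)) (fun k _ => hL2 i k) using 1
          ext ω; simp)
    have h2 : ∀ i : Fin p,
        Real.sqrt (∫ ω, ‖∑ k ∈ Finset.Icc 1 (n i), v i k ω‖ ^ 2 ∂μ)
          ≤ C * (1 - α)⁻¹ * ((n i : ℝ)) ^ (1 - α) := by
      intro i
      have h21 : Real.sqrt (∫ ω, ‖∑ k ∈ Finset.Icc 1 (n i), v i k ω‖ ^ 2 ∂μ)
          ≤ ∑ k ∈ Finset.Icc 1 (n i), Real.sqrt (∫ ω, ‖v i k ω‖ ^ 2 ∂μ) :=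
        sqrt_int_sum_le (Finset.Icc 1 (n i)) (fun k ω => v i k ω) (fun k _ => hL2 i k)
      have h22 : ∑ k ∈ Finset.Icc 1 (n i), Real.sqrt (∫ ω, ‖v i k ω‖ ^ 2 ∂μ)
          ≤ ∑ k ∈ Finset.Icc 1 (n i), C * (k : ℝ) ^ (-α) :=
        Finset.sum_le_sum (hbound i)
      have h23 : ∑ k ∈ Finset.Icc 1 (n i), C * (k : ℝ) ^ (-α)
          ≤ C * ((1 - α)⁻¹ * ((n i : ℝ)) ^ (1 - α)) := by
        rw [← Finset.mul_sum]
        exact mul_le_mul_of_nonneg_left (sum_rpow_neg_le hα0 hα1 (n i)) hC.le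
      calc Real.sqrt (∫ ω, ‖∑ k ∈ Finset.Icc 1 (n i), v i k ω‖ ^ 2 ∂μ)
          ≤ ∑ k ∈ Finset.Icc 1 (n i), C * (k : ℝ) ^ (-α) := h21.trans h22
        _ ≤ C * ((1 - α)⁻¹ * ((n i : ℝ)) ^ (1 - α)) := h23
        _ = C * (1 - α)⁻¹ * ((n i : ℝ)) ^ (1 - α) := by ring
    have h3 : ∑ i, (C * (1 - α)⁻¹ * ((n i : ℝ)) ^ (1 - α))
        = C * (1 - α)⁻¹ * ∑ i, ((n i : ℝ)) ^ (1 - α) := by rw [Finset.mul_sum]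
    have h4 : ∑ i, ((n i : ℝ)) ^ (1 - α) ≤ (p : ℝ) ^ α * N ^ (1 - α) := by
      have := sum_rpow_le hp hγ (by linarith) (fun i => (n i : ℝ)) (fun i => Nat.cast_nonneg _)
      have hexp : (1 : ℝ) - (1 - α) = α := by ring
      rwa [hexp] at this
    calc Real.sqrt I ≤ ∑ i, Real.sqrt (∫ ω, ‖∑ k ∈ Finset.Icc 1 (n i), v i k ω‖ ^ 2 ∂μ) := h1
      _ ≤ ∑ i, (C * (1 - α)⁻¹ * ((n i : ℝ)) ^ (1 - α)) := Finset.sum_le_sum fun i _ => h2 i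
      _ = C * (1 - α)⁻¹ * ∑ i, ((n i : ℝ)) ^ (1 - α) := h3
      _ ≤ C * (1 - α)⁻¹ * ((p : ℝ) ^ α * N ^ (1 - α)) := by
          refine mul_le_mul_of_nonneg_left h4 (by positivity)
      _ = B := by rw [hBdef]; ring
  have hIB : I ≤ B ^ 2 := by
    have := pow_le_pow_left₀ (Real.sqrt_nonneg I) hA 2
    rwa [Real.sq_sqrt hI0] at this
  -- rewrite the LHS
  have hLHS : ∫ ω, ‖(N⁻¹) • S ω‖ ^ 2 ∂μ = (N⁻¹) ^ 2 * I := by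
    rw [hIdef, ← integral_const_mul]
    refine integral_congr_ae (Filter.Eventually.of_forall fun ω => ?_)
    show ‖N⁻¹ • S ω‖ ^ 2 = N⁻¹ ^ 2 * ‖S ω‖ ^ 2
    rw [norm_smul, mul_pow, Real.norm_eq_abs, abs_of_nonneg (inv_nonneg.mpr hNpos.le)]
  have sq_rpow : ∀ (x a : ℝ), 0 ≤ x → (x ^ a) ^ 2 = x ^ (2 * a) := by
    intro x a hx
    rw [← Real.rpow_natCast (x ^ a) 2, ← Real.rpow_mul hx]
    norm_num [mul_comm]
  have e1 : (N⁻¹) ^ 2 = N ^ (-2 : ℝ) := by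
    rw [← Real.rpow_neg_one N, ← Real.rpow_natCast (N ^ (-1 : ℝ)) 2, ← Real.rpow_mul hNpos.le]
    norm_num
  have key : (N⁻¹) ^ 2 * (N ^ (1 - α)) ^ 2 = N ^ (-(2 * α)) := by
    rw [e1, sq_rpow N (1 - α) hNpos.le, ← Real.rpow_add hNpos]
    ring_nf
  have hp2 : ((p : ℝ) ^ α) ^ 2 = (p : ℝ) ^ (2 * α) := sq_rpow _ _ (Nat.cast_nonneg p)
  calc ∫ ω, ‖(N⁻¹) • S ω‖ ^ 2 ∂μ = (N⁻¹) ^ 2 * I := hLHS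
    _ ≤ (N⁻¹) ^ 2 * B ^ 2 := mul_le_mul_of_nonneg_left hIB (by positivity)
    _ = C ^ 2 * ((1 - α)⁻¹) ^ 2 * ((p : ℝ) ^ α) ^ 2 * ((N⁻¹) ^ 2 * (N ^ (1 - α)) ^ 2) := by
        rw [hBdef]; ring
    _ = C ^ 2 * ((1 - α)⁻¹) ^ 2 * (p : ℝ) ^ (2 * α) * N ^ (-(2 * α)) := by rw [hp2, key]
end

section
/- Let L₁ > 0, C₁ > 0, 0 < α < 1, p ≥ 1 an integer, n_1, …, n_p positive integers with N = ∑_i n_i. Let (ξ_{i,k+1}) be H-valued square-integrable random variables such that (a) for each i, (ξ_{i,k}) is a martingale difference sequence with respect to a filtration (F_{i,k}), (b) the families (ξ_{i,·}) for distinct i are independent, and (c) E[‖ξ_{i,k+1}‖²] ≤ L₁(1 + C₁ k^{-α}) for all i, k. Then E[‖(1/N)∑_{i=1}^{p}∑_{k=1}^{n_i} ξ_{i,k+1}‖²] ≤ L₁/N + L₁C₁(1−α)^{-1}·p^{α}·N^{-(1+α)}. -/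
open MeasureTheory ProbabilityTheory

open scoped RealInnerProductSpace

section Aux


variable {Ω : Type*} {m0 : MeasurableSpace Ω} {μ : Measure Ω} [IsProbabilityMeasure μ]
  {H : Type*} [NormedAddCommGroup H] [InnerProductSpace ℝ H] [CompleteSpace H]

lemma aux_integral_inner_eq_zero {m : MeasurableSpace Ω} (hm : m ≤ m0)
    {X Y : Ω → H} (hX : MemLp X 2 μ) (hY : MemLp Y 2 μ)
    (hXm : AEStronglyMeasurable[m] X μ) (hY0 : μ[Y|m] =ᵐ[μ] 0) :
    ∫ ω, ⟪X ω, Y ω⟫ ∂μ = 0 := by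
  haveI : SigmaFinite (μ.trim hm) := by
    haveI := isFiniteMeasure_trim hm (μ := μ)
    infer_instance
  set fX : Lp H 2 μ := hX.toLp X with hfX
  set fY : Lp H 2 μ := hY.toLp Y with hfY
  have hXc : fX =ᵐ[μ] X := hX.coeFn_toLp
  have hYc : fY =ᵐ[μ] Y := hY.coeFn_toLp
  have hcond : (condExpL2 H ℝ hm fY : Ω → H) =ᵐ[μ] μ[Y|m] := by
    refine ae_eq_condExp_of_forall_setIntegral_eq hm (hY.integrable one_le_two)
      (fun s _ hμs => integrableOn_condExpL2_of_measure_ne_top hm hμs.ne fY)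
      (fun s hs hμs => ?_) (aestronglyMeasurable_condExpL2 hm fY)
    rw [integral_condExpL2_eq hm fY hs hμs.ne]
    exact integral_congr_ae (ae_restrict_of_ae hYc)
  have hcond0 : (condExpL2 H ℝ hm fY : Ω → H) =ᵐ[μ] 0 := hcond.trans hY0
  have h1 : (inner (𝕜 := ℝ) ((condExpL2 H ℝ hm fY : Lp H 2 μ)) fX)
      = inner (𝕜 := ℝ) fY fX :=
    inner_condExpL2_eq_inner_fun hm fY fX (hXm.congr hXc.symm)
  have h2 : (inner (𝕜 := ℝ) ((condExpL2 H ℝ hm fY : Lp H 2 μ)) fX : ℝ) = 0 := by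
    show ∫ ω, (inner (𝕜 := ℝ)
        ((condExpL2 H ℝ hm fY : Ω → H) ω) ((fX : Ω → H) ω) : ℝ) ∂μ = 0
    have he : (fun ω => (inner (𝕜 := ℝ)
        ((condExpL2 H ℝ hm fY : Ω → H) ω) ((fX : Ω → H) ω) : ℝ)) =ᵐ[μ] 0 :=
      hcond0.mono fun ω hω => by simp only [hω, Pi.zero_apply, inner_zero_left]
    rw [integral_congr_ae he]
    simp
  rw [h1] at h2
  have h2' : ∫ ω, ⟪(fY : Ω → H) ω, (fX : Ω → H) ω⟫ ∂μ = 0 := h2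
  have h3 : ∫ ω, ⟪Y ω, X ω⟫ ∂μ = 0 := by
    rw [← h2']
    exact integral_congr_ae ((hYc.and hXc).mono fun ω hω => by
      show ⟪Y ω, X ω⟫ = ⟪(fY : Ω → H) ω, (fX : Ω → H) ω⟫; rw [hω.1, hω.2])
  calc ∫ ω, ⟪X ω, Y ω⟫ ∂μ = ∫ ω, ⟪Y ω, X ω⟫ ∂μ :=
        integral_congr_ae (Filter.Eventually.of_forall
          (fun ω => real_inner_comm (Y ω) (X ω)))
    _ = 0 := h3

lemma aux_key {α : ℝ} (hα0 : 0 < α) (hα1 : α < 1) (n : ℕ) :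
    ((n : ℝ)) ^ (1 - α) + (1 - α) * ((n : ℝ) + 1) ^ (-α) ≤ ((n : ℝ) + 1) ^ (1 - α) := by
  set t : ℝ := (n : ℝ) + 1 with ht
  have ht0 : (0 : ℝ) < t := by positivity
  have h1t : (1 : ℝ) ≤ t := le_add_of_nonneg_left (Nat.cast_nonneg n)
  have hdt : 1 / t ≤ 1 := (div_le_one ht0).mpr h1t
  have hb := rpow_one_add_le_one_add_mul_self (s := -1 / t)
    (by rw [neg_div]; linarith) (p := 1 - α) (by linarith) (by linarith)
  have h1 : (1 : ℝ) + -1 / t = (n : ℝ) / t := by field_simp; rw [ht]; ring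
  rw [h1] at hb
  have h2 : ((n : ℝ) / t) ^ (1 - α) = (n : ℝ) ^ (1 - α) / t ^ (1 - α) :=
    Real.div_rpow (Nat.cast_nonneg n) ht0.le _
  rw [h2] at hb
  have h3 : (n : ℝ) ^ (1 - α) ≤ (1 + (1 - α) * (-1 / t)) * t ^ (1 - α) := by
    rw [← div_le_iff₀ (Real.rpow_pos_of_pos ht0 _)] at *
    exact hb
  have h4 : t ^ (1 - α) / t = t ^ (-α) := by
    rw [Real.rpow_sub ht0 1 α, Real.rpow_one, Real.rpow_neg ht0.le]; field_simp
  calc (n : ℝ) ^ (1 - α) + (1 - α) * t ^ (-α)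
      ≤ (1 + (1 - α) * (-1 / t)) * t ^ (1 - α) + (1 - α) * t ^ (-α) := by linarith
    _ = t ^ (1 - α) := by
        rw [← h4]; field_simp; ring

lemma aux_sum_rpow {α : ℝ} (hα0 : 0 < α) (hα1 : α < 1) (n : ℕ) :
    ∑ k ∈ Finset.Icc 1 n, (k : ℝ) ^ (-α) ≤ (1 - α)⁻¹ * (n : ℝ) ^ (1 - α) := by
  have h1α : (0:ℝ) < 1 - α := by linarith
  induction n with
  | zero => simp [Real.zero_rpow h1α.ne']
  | succ n ih =>
    rw [Finset.sum_Icc_succ_top (by omega : 1 ≤ n + 1)]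
    have hk := aux_key hα0 hα1 n
    have hcast : ((n + 1 : ℕ) : ℝ) = (n : ℝ) + 1 := by push_cast; ring
    rw [hcast]
    have h5 : (1-α)⁻¹ * ((n:ℝ)^(1-α) + (1-α)*((n:ℝ)+1)^(-α))
        ≤ (1-α)⁻¹ * (((n:ℝ)+1)^(1-α)) :=
      mul_le_mul_of_nonneg_left hk (inv_nonneg.mpr h1α.le)
    have h6 : (1-α)⁻¹ * ((1-α)*(((n:ℝ)+1)^(-α))) = ((n:ℝ)+1)^(-α) := by
      field_simp
    rw [mul_add, h6] at h5
    linarith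

lemma aux_holder {α : ℝ} (hα0 : 0 < α) (hα1 : α < 1) {p : ℕ} (hp : 1 ≤ p)
    (f : Fin p → ℝ) (hf : ∀ i, 0 ≤ f i) :
    ∑ i, (f i) ^ (1 - α) ≤ (p : ℝ) ^ α * (∑ i, f i) ^ (1 - α) := by
  have h1α : (0:ℝ) < 1 - α := by linarith
  have hp0 : (0:ℝ) < (p : ℝ) := by exact_mod_cast hp
  have hq1 : (1:ℝ) ≤ (1 - α)⁻¹ := (one_le_inv₀ h1α).mpr (by linarith)
  have hz : ∀ i : Fin p, ((f i) ^ (1 - α)) ^ ((1 - α)⁻¹) = f i := fun i => by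
    rw [← Real.rpow_mul (hf i), mul_inv_cancel₀ h1α.ne', Real.rpow_one]
  have hS : 0 ≤ ∑ i, f i := Finset.sum_nonneg fun i _ => hf i
  have hmean := Real.arith_mean_le_rpow_mean Finset.univ (fun _ => (p:ℝ)⁻¹)
    (fun i => (f i) ^ (1 - α)) (fun i _ => by positivity)
    (by simp [Finset.card_univ, mul_inv_cancel₀ hp0.ne']) 
    (fun i _ => Real.rpow_nonneg (hf i) _) hq1
  have key : (p:ℝ)⁻¹ * ∑ i, (f i) ^ (1 - α)
      ≤ ((p:ℝ)⁻¹) ^ (1 - α) * (∑ i, f i) ^ (1 - α) := by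
    calc (p:ℝ)⁻¹ * ∑ i, (f i) ^ (1 - α) = ∑ i, (p:ℝ)⁻¹ * (f i) ^ (1 - α) := by
          rw [Finset.mul_sum]
      _ ≤ (∑ i, (p:ℝ)⁻¹ * ((f i) ^ (1 - α)) ^ ((1 - α)⁻¹)) ^ (1 / (1 - α)⁻¹) := hmean
      _ = ((p:ℝ)⁻¹ * ∑ i, f i) ^ (1 - α) := by
          rw [one_div, inv_inv]
          congr 1
          rw [Finset.mul_sum]
          exact Finset.sum_congr rfl fun i _ => by rw [hz i]
      _ = ((p:ℝ)⁻¹) ^ (1 - α) * (∑ i, f i) ^ (1 - α) :=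
          Real.mul_rpow (by positivity) hS
  have hfinal : (p:ℝ) * ((p:ℝ)⁻¹) ^ (1 - α) = (p:ℝ) ^ α := by
    rw [Real.inv_rpow hp0.le]
    have hppow : (0:ℝ) < (p:ℝ) ^ (1 - α) := Real.rpow_pos_of_pos hp0 _
    field_simp
    rw [← Real.rpow_add hp0, show 1 - α + α = 1 by ring, Real.rpow_one]
  calc ∑ i, (f i) ^ (1 - α) = (p:ℝ) * ((p:ℝ)⁻¹ * ∑ i, (f i) ^ (1 - α)) := by
        field_simp
    _ ≤ (p:ℝ) * (((p:ℝ)⁻¹) ^ (1 - α) * (∑ i, f i) ^ (1 - α)) :=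
        mul_le_mul_of_nonneg_left key hp0.le
    _ = (p:ℝ) ^ α * (∑ i, f i) ^ (1 - α) := by rw [← mul_assoc, hfinal]

lemma aux_integrable_inner {X Y : Ω → H} (hX : MemLp X 2 μ) (hY : MemLp Y 2 μ) :
    MeasureTheory.Integrable (fun ω => ⟪X ω, Y ω⟫) μ := by
  refine (L2.integrable_inner (𝕜 := ℝ) (hX.toLp X) (hY.toLp Y)).congr
    ((hX.coeFn_toLp.and hY.coeFn_toLp).mono fun ω hω => ?_)
  show ⟪_, _⟫ = ⟪X ω, Y ω⟫
  rw [hω.1, hω.2]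

lemma aux_integral_eq_zero {m : MeasurableSpace Ω} (hm : m ≤ m0) {Y : Ω → H}
    (hY : MeasureTheory.Integrable Y μ) (hY0 : μ[Y|m] =ᵐ[μ] 0) :
    ∫ ω, Y ω ∂μ = 0 := by
  haveI : SigmaFinite (μ.trim hm) := by
    haveI := isFiniteMeasure_trim hm (μ := μ)
    infer_instance
  rw [← integral_condExp hm (f := Y), integral_congr_ae hY0]
  simp


end Aux

set_option maxHeartbeats 1000000 in
theorem stmt_13 {Ω : Type*} {m0 : MeasurableSpace Ω} (μ : Measure Ω) [IsProbabilityMeasure μ]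
    {H : Type*} [NormedAddCommGroup H] [InnerProductSpace ℝ H] [CompleteSpace H]
    [MeasurableSpace H] [BorelSpace H] [SecondCountableTopology H]
    (L₁ C₁ α : ℝ) (hL₁ : 0 < L₁) (hC₁ : 0 < C₁) (hα0 : 0 < α) (hα1 : α < 1)
    (p : ℕ) (hp : 1 ≤ p) (n : Fin p → ℕ) (hn : ∀ i, 1 ≤ n i)
    (ξ : Fin p → ℕ → Ω → H) (ℱ : Fin p → Filtration ℕ m0)
    (hL2 : ∀ i k, MemLp (ξ i k) 2 μ)
    (hadap : ∀ i k, StronglyMeasurable[(ℱ i) k] (ξ i k))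
    (hmd : ∀ i, ∀ k : ℕ, 1 ≤ k → μ[ξ i k | (ℱ i) (k - 1)] =ᵐ[μ] 0)
    (hindep : iIndep (fun i => ⨆ k, MeasurableSpace.comap (ξ i k) inferInstance) μ)
    (hbound : ∀ i k, ∫ ω, ‖ξ i (k + 1) ω‖ ^ 2 ∂μ ≤ L₁ * (1 + C₁ * (k : ℝ) ^ (-α))) :
    ∫ ω, ‖((∑ i, (n i : ℝ))⁻¹) • ∑ i, ∑ k ∈ Finset.Icc 1 (n i), ξ i (k + 1) ω‖ ^ 2 ∂μ
      ≤ L₁ / (∑ i, (n i : ℝ))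
        + L₁ * C₁ * (1 - α)⁻¹ * (p : ℝ) ^ α * (∑ i, (n i : ℝ)) ^ (-(1 + α)) := by
  classical
  haveI : Nonempty (Fin p) := ⟨⟨0, by omega⟩⟩
  set N : ℝ := ∑ i, (n i : ℝ) with hN
  have hN1 : (1 : ℝ) ≤ N := by
    calc (1:ℝ) ≤ (p : ℝ) := by exact_mod_cast hp
      _ = ∑ _i : Fin p, (1:ℝ) := by simp
      _ ≤ N := Finset.sum_le_sum fun i _ => by exact_mod_cast hn i
  have hN0 : (0 : ℝ) < N := lt_of_lt_of_le one_pos hN1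
  -- basic measurability facts
  set σa : Fin p → MeasurableSpace Ω :=
    fun i => ⨆ k, MeasurableSpace.comap (ξ i k) inferInstance with hσa
  have hmeas_sigma : ∀ j l, StronglyMeasurable[σa j] (ξ j l) := fun j l =>
    (Measurable.mono (measurable_iff_comap_le.mpr le_rfl)
      (le_iSup (fun k => MeasurableSpace.comap (ξ j k) inferInstance) l) le_rfl).stronglyMeasurable
  have hle_sigma : ∀ j, σa j ≤ m0 := fun j =>
    iSup_le fun k => measurable_iff_comap_le.mp ((hadap j k).mono ((ℱ j).le k)).measurable
  -- zero mean
  have hmd' : ∀ i (k : ℕ), μ[ξ i (k + 1) | (ℱ i) k] =ᵐ[μ] 0 := fun i k => by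
    simpa using hmd i (k + 1) (by omega)
  have hmean0 : ∀ i (k : ℕ), ∫ ω, ξ i (k + 1) ω ∂μ = 0 := fun i k =>
    aux_integral_eq_zero ((ℱ i).le k) ((hL2 i (k+1)).integrable one_le_two) (hmd' i k)
  -- cross terms vanish
  have hgen : ∀ i (k l : ℕ), k < l → ∫ ω, ⟪ξ i (k + 1) ω, ξ i (l + 1) ω⟫ ∂μ = 0 :=
    fun i k l hkl =>
      aux_integral_inner_eq_zero ((ℱ i).le l) (hL2 i (k+1)) (hL2 i (l+1))
        (((hadap i (k+1)).mono ((ℱ i).mono (by omega : k + 1 ≤ l))).aestronglyMeasurable)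
        (hmd' i l)
  have hgen2 : ∀ i j (k l : ℕ), i ≠ j →
      ∫ ω, ⟪ξ j (l + 1) ω, ξ i (k + 1) ω⟫ ∂μ = 0 := by
    intro i j k l hij
    haveI : SigmaFinite (μ.trim (hle_sigma j)) := by
      haveI := isFiniteMeasure_trim (hle_sigma j) (μ := μ)
      infer_instance
    have hY0 : μ[ξ i (k + 1) | σa j] =ᵐ[μ] 0 := by
      refine (condExp_indep_eq (hle_sigma i) (hle_sigma j) (hmeas_sigma i (k+1))
        (hindep.indep hij)).trans ?_
      rw [hmean0 i k]
      rfl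
    exact aux_integral_inner_eq_zero (hle_sigma j) (hL2 j (l+1)) (hL2 i (k+1))
      (hmeas_sigma j (l+1)).aestronglyMeasurable hY0
  have hcross : ∀ (q r : (_ : Fin p) × ℕ), q ≠ r →
      ∫ ω, ⟪ξ q.1 (q.2 + 1) ω, ξ r.1 (r.2 + 1) ω⟫ ∂μ = 0 := by
    rintro ⟨i, k⟩ ⟨j, l⟩ hne
    rcases eq_or_ne i j with rfl | hij
    · have hkl : k ≠ l := fun h => hne (by simp [h])
      rcases hkl.lt_or_gt with h | h
      · exact hgen i k l h
      · rw [integral_congr_ae (Filter.Eventually.of_forall fun ω =>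
          real_inner_comm (ξ i (l+1) ω) (ξ i (k+1) ω))]
        exact hgen i l k h
    · exact hgen2 j i l k hij.symm
  -- the index set
  set T : Finset ((_ : Fin p) × ℕ) := Finset.univ.sigma fun i => Finset.Icc 1 (n i) with hT
  -- expansion of second moment
  have hexpand : ∫ ω, ‖∑ q ∈ T, ξ q.1 (q.2 + 1) ω‖ ^ 2 ∂μ
      = ∑ q ∈ T, ∫ ω, ‖ξ q.1 (q.2 + 1) ω‖ ^ 2 ∂μ := by
    have h1 : ∀ ω, ‖∑ q ∈ T, ξ q.1 (q.2 + 1) ω‖ ^ 2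
        = ∑ q ∈ T, ∑ r ∈ T, ⟪ξ q.1 (q.2 + 1) ω, ξ r.1 (r.2 + 1) ω⟫ := fun ω => by
      rw [← real_inner_self_eq_norm_sq, sum_inner]
      exact Finset.sum_congr rfl fun q _ => inner_sum _ _ _
    simp_rw [h1]
    rw [integral_finset_sum _ fun q _ => integrable_finset_sum _ fun r _ =>
      aux_integrable_inner (hL2 q.1 (q.2+1)) (hL2 r.1 (r.2+1))]
    refine Finset.sum_congr rfl fun q hq => ?_
    rw [integral_finset_sum _ fun r _ => aux_integrable_inner (hL2 q.1 (q.2+1)) (hL2 r.1 (r.2+1))]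
    rw [Finset.sum_eq_single_of_mem q hq (fun r _ hrq => hcross q r (Ne.symm hrq))]
    exact integral_congr_ae (Filter.Eventually.of_forall fun ω =>
      real_inner_self_eq_norm_sq _)
  -- bound the sum of second moments
  have hsumbound : ∑ q ∈ T, ∫ ω, ‖ξ q.1 (q.2 + 1) ω‖ ^ 2 ∂μ
      ≤ L₁ * N + L₁ * C₁ * (1 - α)⁻¹ * (p : ℝ) ^ α * N ^ (1 - α) := by
    calc ∑ q ∈ T, ∫ ω, ‖ξ q.1 (q.2 + 1) ω‖ ^ 2 ∂μ
        ≤ ∑ q ∈ T, L₁ * (1 + C₁ * ((q.2 : ℝ)) ^ (-α)) :=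
          Finset.sum_le_sum fun q _ => hbound q.1 q.2
      _ = ∑ i, ∑ k ∈ Finset.Icc 1 (n i), L₁ * (1 + C₁ * ((k : ℝ)) ^ (-α)) := by
          rw [hT, Finset.sum_sigma]
      _ = L₁ * N + L₁ * C₁ * ∑ i, ∑ k ∈ Finset.Icc 1 (n i), ((k : ℝ)) ^ (-α) := by
          simp_rw [mul_add, mul_one, Finset.sum_add_distrib, Finset.mul_sum]
          rw [hN]
          congr 1
          · simp only [Finset.sum_const, Nat.card_Icc, smul_eq_mul]
            rw [Finset.mul_sum]
            refine Finset.sum_congr rfl fun i _ => ?_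
            have hni : n i + 1 - 1 = n i := by omega
            rw [hni, nsmul_eq_mul, mul_comm]
          · exact Finset.sum_congr rfl fun i _ =>
              Finset.sum_congr rfl fun k _ => by ring
      _ ≤ L₁ * N + L₁ * C₁ * ∑ i, (1 - α)⁻¹ * ((n i : ℝ)) ^ (1 - α) := by
          have := fun i : Fin p => aux_sum_rpow hα0 hα1 (n i)
          have h2 : (0:ℝ) ≤ L₁ * C₁ := by positivity
          have h3 : ∑ i, ∑ k ∈ Finset.Icc 1 (n i), ((k : ℝ)) ^ (-α)
              ≤ ∑ i, (1 - α)⁻¹ * ((n i : ℝ)) ^ (1 - α) :=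
            Finset.sum_le_sum fun i _ => this i
          nlinarith
      _ ≤ L₁ * N + L₁ * C₁ * (1 - α)⁻¹ * (p : ℝ) ^ α * N ^ (1 - α) := by
          have h4 : ∑ i, ((n i : ℝ)) ^ (1 - α) ≤ (p : ℝ) ^ α * N ^ (1 - α) :=
            aux_holder hα0 hα1 hp (fun i => (n i : ℝ)) (fun i => Nat.cast_nonneg _)
          have h5 : ∑ i, (1 - α)⁻¹ * ((n i : ℝ)) ^ (1 - α)
              = (1 - α)⁻¹ * ∑ i, ((n i : ℝ)) ^ (1 - α) := by rw [Finset.mul_sum]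
          have h6 : (0:ℝ) ≤ (1 - α)⁻¹ := by
            have h1α : (0:ℝ) < 1 - α := by linarith
            positivity
          have h7 : (0:ℝ) ≤ L₁ * C₁ := by positivity
          rw [h5]
          nlinarith [mul_le_mul_of_nonneg_left h4 h6]
  -- put it together
  have hreindex : ∀ ω, ∑ i, ∑ k ∈ Finset.Icc 1 (n i), ξ i (k + 1) ω
      = ∑ q ∈ T, ξ q.1 (q.2 + 1) ω := fun ω => by rw [hT, Finset.sum_sigma]
  have hmain : ∫ ω, ‖(N⁻¹) • ∑ i, ∑ k ∈ Finset.Icc 1 (n i), ξ i (k + 1) ω‖ ^ 2 ∂μ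
      = (N ^ 2)⁻¹ * ∫ ω, ‖∑ q ∈ T, ξ q.1 (q.2 + 1) ω‖ ^ 2 ∂μ := by
    simp_rw [hreindex, norm_smul, mul_pow, norm_inv, Real.norm_eq_abs,
      abs_of_pos hN0, integral_const_mul, inv_pow]
  rw [hmain]
  have hfinal : (N ^ 2)⁻¹ * (L₁ * N + L₁ * C₁ * (1 - α)⁻¹ * (p : ℝ) ^ α * N ^ (1 - α))
      = L₁ / N + L₁ * C₁ * (1 - α)⁻¹ * (p : ℝ) ^ α * N ^ (-(1 + α)) := by
    have e1 : (N ^ 2)⁻¹ * N ^ (1 - α) = N ^ (-(1 + α)) := by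
      rw [← Real.rpow_natCast N 2, ← Real.rpow_neg hN0.le, ← Real.rpow_add hN0]
      norm_num
      ring_nf
    have e2 : (N ^ 2)⁻¹ * N = N⁻¹ := by
      field_simp
    rw [mul_add]
    rw [show (N ^ 2)⁻¹ * (L₁ * N) = L₁ * ((N ^ 2)⁻¹ * N) by ring, e2,
      show (N ^ 2)⁻¹ * (L₁ * C₁ * (1 - α)⁻¹ * (p : ℝ) ^ α * N ^ (1 - α))
        = L₁ * C₁ * (1 - α)⁻¹ * (p : ℝ) ^ α * ((N ^ 2)⁻¹ * N ^ (1 - α)) by ring, e1]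
    rw [div_eq_mul_inv]
  rw [← hfinal]
  have hpos : (0:ℝ) ≤ (N ^ 2)⁻¹ := by positivity
  exact mul_le_mul_of_nonneg_left (hexpand ▸ hsumbound) hpos
end
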